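/- For every integer n ≥ 4, the neighborhood polynomials of consecutive ladder graphs satisfy the recursion N(L_n, x) = N(L_{n−1}, x) + 2·x·(1+x)². -/

import Mathlib

open Classical in
/-- The neighborhood polynomial of a finite simple graph `G`, evaluated at `x`:
the generating function of the family of vertex subsets having a common neighbor. -/
noncomputable def nhdPoly {V : Type*} [Fintype V] (G : SimpleGraph V) (x : ℝ) : ℝ :=
  ∑ A ∈ Finset.univ.filter (fun A : Finset V => ∃ w : V, ∀ a ∈ A, G.Adj w a), x ^ A.card

open Classical in
noncomputable def fam (k : ℕ) : Finset (Finset (Fin 2 × Fin k)) :=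
  Finset.univ.filter
    (fun A => ∃ w, ∀ a ∈ A, (SimpleGraph.pathGraph 2 □ SimpleGraph.pathGraph k).Adj w a)

lemma nhdPoly_eq (k : ℕ) (x : ℝ) :
    nhdPoly (SimpleGraph.pathGraph 2 □ SimpleGraph.pathGraph k) x = ∑ A ∈ fam k, x ^ A.card := by
  unfold nhdPoly fam
  apply Finset.sum_congr _ (fun _ _ => rfl)
  ext A
  simp only [Finset.mem_filter]

lemma mem_fam {k : ℕ} {A : Finset (Fin 2 × Fin k)} :
    A ∈ fam k ↔ ∃ w, ∀ a ∈ A, (SimpleGraph.pathGraph 2 □ SimpleGraph.pathGraph k).Adj w a := by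
  simp only [fam, Finset.mem_filter, Finset.mem_univ, true_and]

lemma ladder_adj {k : ℕ} (p q : Fin 2 × Fin k) :
    (SimpleGraph.pathGraph 2 □ SimpleGraph.pathGraph k).Adj p q ↔
      (((p.1 : ℕ) + 1 = (q.1 : ℕ) ∨ (q.1 : ℕ) + 1 = (p.1 : ℕ)) ∧ (p.2 : ℕ) = (q.2 : ℕ)) ∨
      (((p.2 : ℕ) + 1 = (q.2 : ℕ) ∨ (q.2 : ℕ) + 1 = (p.2 : ℕ)) ∧ (p.1 : ℕ) = (q.1 : ℕ)) := by
  cases p; cases q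
  simp [SimpleGraph.boxProd_adj, SimpleGraph.pathGraph_adj, Fin.ext_iff]

lemma sum_powerset_pow {α : Type*} [DecidableEq α] (s : Finset α) (x : ℝ) :
    ∑ B ∈ s.powerset, x ^ B.card = (1 + x) ^ s.card := by
  have h := Finset.prod_add (fun _ : α => x) (fun _ : α => 1) s
  simp [Finset.prod_const] at h
  rw [add_comm]
  exact h.symm

section
variable {m : ℕ}

/-- vertices of last-column characterization -/
lemma char_last (hm : 3 ≤ m) (c : Fin 2) (A : Finset (Fin 2 × Fin (m + 1)))
    (hA : A ∈ fam (m + 1)) (hv : (c, Fin.last m) ∈ A) :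
    A ⊆ {(c, Fin.last m), (c + 1, (⟨m - 1, by omega⟩ : Fin (m + 1))),
          (c, (⟨m - 2, by omega⟩ : Fin (m + 1)))} := by
  obtain ⟨w, hw⟩ := mem_fam.mp hA
  intro p hp
  have h1 := hw _ hv
  have h2 := hw _ hp
  rw [ladder_adj] at h1 h2
  have hc2 : ((c + 1 : Fin 2) : ℕ) = ((c : ℕ) + 1) % 2 := by
    simp [Fin.val_add]
  have hc : (c : ℕ) < 2 := c.isLt
  have hw1 : (w.1 : ℕ) < 2 := w.1.isLt
  have hp1 : (p.1 : ℕ) < 2 := p.1.isLt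
  have hw2 : (w.2 : ℕ) < m + 1 := w.2.isLt
  have hp2 : (p.2 : ℕ) < m + 1 := p.2.isLt
  simp only [Finset.mem_insert, Finset.mem_singleton, Prod.ext_iff, Fin.ext_iff,
    Fin.val_last] at *
  omega

lemma filter_last (hm : 3 ≤ m) (c : Fin 2) :
    (fam (m + 1)).filter (fun A => (c, Fin.last m) ∈ A) =
      (({(c + 1, (⟨m - 1, by omega⟩ : Fin (m + 1))),
         (c, (⟨m - 2, by omega⟩ : Fin (m + 1)))} : Finset (Fin 2 × Fin (m + 1))).powerset).image
        (insert (c, Fin.last m)) := by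
  ext A
  simp only [Finset.mem_filter, Finset.mem_image, Finset.mem_powerset]
  constructor
  · rintro ⟨hA, hv⟩
    refine ⟨A.erase (c, Fin.last m), ?_, Finset.insert_erase hv⟩
    intro p hp
    have hp' := Finset.mem_of_mem_erase hp
    have hne := Finset.ne_of_mem_erase hp
    have := char_last hm c A hA hv hp'
    simp only [Finset.mem_insert, Finset.mem_singleton] at this ⊢
    tauto
  · rintro ⟨B, hB, rfl⟩
    refine ⟨?_, Finset.mem_insert_self _ _⟩
    rw [mem_fam]
    refine ⟨(c, (⟨m - 1, by omega⟩ : Fin (m + 1))), ?_⟩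
    intro a ha
    rw [ladder_adj]
    have hc2 : ((c + 1 : Fin 2) : ℕ) = ((c : ℕ) + 1) % 2 := by simp [Fin.val_add]
    have hc : (c : ℕ) < 2 := c.isLt
    rcases Finset.mem_insert.mp ha with rfl | haB
    · simp only [Fin.val_last, Fin.val_mk, and_true, true_and]
      omega
    · have := hB haB
      simp only [Finset.mem_insert, Finset.mem_singleton] at this
      rcases this with rfl | rfl <;>
        · simp only [Fin.val_last, Fin.val_mk, and_true, true_and]
          omega

lemma sum_filter_last (hm : 3 ≤ m) (c : Fin 2) (x : ℝ) :
    ∑ A ∈ (fam (m + 1)).filter (fun A => (c, Fin.last m) ∈ A), x ^ A.card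
      = x * (1 + x) ^ 2 := by
  classical
  have hc2 : ((c + 1 : Fin 2) : ℕ) = ((c : ℕ) + 1) % 2 := by simp [Fin.val_add]
  have hc : (c : ℕ) < 2 := c.isLt
  set a : Fin 2 × Fin (m + 1) := (c + 1, (⟨m - 1, by omega⟩ : Fin (m + 1))) with ha
  set b : Fin 2 × Fin (m + 1) := (c, (⟨m - 2, by omega⟩ : Fin (m + 1))) with hb
  have hvab : (c, Fin.last m) ∉ ({a, b} : Finset (Fin 2 × Fin (m + 1))) := by
    simp only [Finset.mem_insert, Finset.mem_singleton, ha, hb, Prod.ext_iff, Fin.ext_iff,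
      Fin.val_last]
    omega
  have hab : a ≠ b := by
    simp only [ha, hb, Ne, Prod.ext_iff, Fin.ext_iff]
    omega
  rw [filter_last hm c, Finset.sum_image]
  · have hcongr : ∀ B ∈ ({a, b} : Finset (Fin 2 × Fin (m + 1))).powerset,
        x ^ (insert (c, Fin.last m) B).card = x ^ B.card * x := by
      intro B hB
      rw [Finset.mem_powerset] at hB
      rw [Finset.card_insert_of_notMem (fun h => hvab (hB h)), pow_succ]
    rw [Finset.sum_congr rfl hcongr, ← Finset.sum_mul, sum_powerset_pow,
      Finset.card_insert_of_notMem (by simpa using hab), Finset.card_singleton]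
    ring
  · intro B hB B' hB' hins
    rw [Finset.mem_coe, Finset.mem_powerset] at hB hB'
    have h1 : (c, Fin.last m) ∉ B := fun h => hvab (hB h)
    have h2 : (c, Fin.last m) ∉ B' := fun h => hvab (hB' h)
    rw [← Finset.erase_insert h1, ← Finset.erase_insert h2, hins]

end

def up (m : ℕ) (p : Fin 2 × Fin m) : Fin 2 × Fin (m + 1) :=
  (p.1, ⟨p.2.1, Nat.lt_succ_of_lt p.2.2⟩)

lemma up_inj (m : ℕ) : Function.Injective (up m) := by
  rintro ⟨a, i⟩ ⟨b, j⟩ h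
  simpa [up, Prod.ext_iff, Fin.ext_iff] using h

section
variable {m : ℕ}

lemma sum_rest (hm : 3 ≤ m) (x : ℝ) :
    ∑ A ∈ (fam (m + 1)).filter
        (fun A => ((0 : Fin 2), Fin.last m) ∉ A ∧ ((1 : Fin 2), Fin.last m) ∉ A), x ^ A.card
      = ∑ A ∈ fam m, x ^ A.card := by
  classical
  refine (Finset.sum_nbij' (fun A => A.image (up m))
      (fun B => B.image (fun p : Fin 2 × Fin (m + 1) =>
        ((p.1, ⟨m - 1 - (m - 1 - p.2.1), by omega⟩) : Fin 2 × Fin m)))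
      ?_ ?_ ?_ ?_ ?_).symm
  · -- hi : image up ∈ filter
    intro A hA
    rw [Finset.mem_filter]
    refine ⟨?_, ?_, ?_⟩
    · obtain ⟨w, hw⟩ := mem_fam.mp hA
      refine mem_fam.mpr ⟨up m w, ?_⟩
      intro a ha
      obtain ⟨p, hp, rfl⟩ := Finset.mem_image.mp ha
      have h2 := hw p hp
      rw [ladder_adj] at h2 ⊢
      simpa [up] using h2
    · intro h
      obtain ⟨p, hp, hq⟩ := Finset.mem_image.mp h
      have := p.2.2
      simp only [up, Prod.ext_iff, Fin.ext_iff, Fin.val_last] at hq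
      omega
    · intro h
      obtain ⟨p, hp, hq⟩ := Finset.mem_image.mp h
      have := p.2.2
      simp only [up, Prod.ext_iff, Fin.ext_iff, Fin.val_last] at hq
      omega
  · -- hj : image down ∈ fam m
    intro B hB
    rw [Finset.mem_filter] at hB
    obtain ⟨hBfam, hv0, hv1⟩ := hB
    have hcol : ∀ p ∈ B, p.2.1 < m := by
      intro p hp
      by_contra hcon
      have h2 : p.2.1 = m := by have := p.2.2; omega
      have : p = ((0 : Fin 2), Fin.last m) ∨ p = ((1 : Fin 2), Fin.last m) := by
        rcases p with ⟨e, i⟩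
        have he : e.1 < 2 := e.2
        simp only [Prod.ext_iff, Fin.ext_iff, Fin.val_last, Fin.val_zero, Fin.val_one]
        simp only [Fin.val_last] at h2
        omega
      rcases this with rfl | rfl
      · exact hv0 hp
      · exact hv1 hp
    obtain ⟨⟨d, j⟩, hw⟩ := mem_fam.mp hBfam
    by_cases hj2 : j.1 < m
    · refine mem_fam.mpr ⟨(d, ⟨j.1, hj2⟩), ?_⟩
      intro a ha
      obtain ⟨p, hp, rfl⟩ := Finset.mem_image.mp ha
      have h2 := hw p hp
      have hpc := hcol p hp
      rw [ladder_adj] at h2 ⊢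
      simp only [Fin.val_mk] at h2 ⊢
      omega
    · refine mem_fam.mpr ⟨(d + 1, ⟨m - 1, by omega⟩), ?_⟩
      intro a ha
      obtain ⟨p, hp, rfl⟩ := Finset.mem_image.mp ha
      have h2 := hw p hp
      have hpc := hcol p hp
      have hj3 : j.1 = m := by have := j.2; omega
      have hd2 : ((d + 1 : Fin 2) : ℕ) = (d.1 + 1) % 2 := by simp [Fin.val_add]
      have hd : d.1 < 2 := d.2
      rw [ladder_adj] at h2 ⊢
      simp only [Fin.val_mk] at h2 ⊢
      omega
  · -- left_inv
    intro A hA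
    rw [Finset.image_image]
    rw [Finset.image_congr (g := id) ?_, Finset.image_id]
    intro p hp
    have := p.2.2
    simp only [Function.comp_apply, up, id_eq, Prod.ext_iff, Fin.ext_iff, Fin.val_mk,
      true_and, and_true]
    omega
  · -- right_inv
    intro B hB
    rw [Finset.mem_filter] at hB
    have hcol : ∀ p ∈ B, p.2.1 < m := by
      intro p hp
      by_contra hcon
      have h2 : p.2.1 = m := by have := p.2.2; omega
      have : p = ((0 : Fin 2), Fin.last m) ∨ p = ((1 : Fin 2), Fin.last m) := by
        rcases p with ⟨e, i⟩
        have he : e.1 < 2 := e.2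
        simp only [Prod.ext_iff, Fin.ext_iff, Fin.val_last, Fin.val_zero, Fin.val_one]
        simp only [Fin.val_last] at h2
        omega
      rcases this with rfl | rfl
      · exact hB.2.1 hp
      · exact hB.2.2 hp
    rw [Finset.image_image]
    rw [Finset.image_congr (g := id) ?_, Finset.image_id]
    intro p hp
    have := hcol p hp
    simp only [Function.comp_apply, up, id_eq, Prod.ext_iff, Fin.ext_iff, Fin.val_mk,
      true_and, and_true]
    omega
  · -- values
    intro A hA
    rw [Finset.card_image_of_injective A (up_inj m)]

end

/-- Recursion for the neighborhood polynomials of ladder graphs `L_n = P₂ □ P_n` (`n ≥ 4`):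
`N(L_n, x) = N(L_{n−1}, x) + 2·x·(1+x)²`. -/
theorem nhdPoly_ladder_recursion (n : ℕ) (hn : 4 ≤ n) (x : ℝ) :
    nhdPoly (SimpleGraph.pathGraph 2 □ SimpleGraph.pathGraph n) x =
      nhdPoly (SimpleGraph.pathGraph 2 □ SimpleGraph.pathGraph (n - 1)) x
        + 2 * x * (1 + x) ^ 2 := by
  obtain ⟨m, rfl⟩ : ∃ m, n = m + 1 := ⟨n - 1, by omega⟩
  have hm : 3 ≤ m := by omega
  have hred : m + 1 - 1 = m := rfl
  rw [hred, nhdPoly_eq, nhdPoly_eq]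
  classical
  rw [← Finset.sum_filter_add_sum_filter_not (fam (m + 1))
      (fun A => ((0 : Fin 2), Fin.last m) ∈ A) (fun A => x ^ A.card)]
  rw [← Finset.sum_filter_add_sum_filter_not
      ((fam (m + 1)).filter (fun A => ¬ ((0 : Fin 2), Fin.last m) ∈ A))
      (fun A => ((1 : Fin 2), Fin.last m) ∈ A) (fun A => x ^ A.card)]
  have e1 : ∑ A ∈ (fam (m + 1)).filter (fun A => ((0 : Fin 2), Fin.last m) ∈ A), x ^ A.card
      = x * (1 + x) ^ 2 := sum_filter_last hm 0 x
  have emid : ((fam (m + 1)).filter (fun A => ¬ ((0 : Fin 2), Fin.last m) ∈ A)).filter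
      (fun A => ((1 : Fin 2), Fin.last m) ∈ A)
      = (fam (m + 1)).filter (fun A => ((1 : Fin 2), Fin.last m) ∈ A) := by
    rw [Finset.filter_filter]
    apply Finset.filter_congr
    intro A hA
    constructor
    · exact fun h => h.2
    · intro h1
      refine ⟨fun h0 => ?_, h1⟩
      have hsub := char_last hm 1 A hA h1
      have hmem := hsub h0
      have h11 : ((1 + 1 : Fin 2) : ℕ) = 0 := rfl
      simp only [Finset.mem_insert, Finset.mem_singleton, Prod.ext_iff, Fin.ext_iff,
        Fin.val_last, Fin.val_mk, Fin.val_zero, Fin.val_one] at hmem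
      omega
  have e2 : ∑ A ∈ ((fam (m + 1)).filter (fun A => ¬ ((0 : Fin 2), Fin.last m) ∈ A)).filter
      (fun A => ((1 : Fin 2), Fin.last m) ∈ A), x ^ A.card = x * (1 + x) ^ 2 := by
    rw [emid]
    exact sum_filter_last hm 1 x
  have e3 : ∑ A ∈ ((fam (m + 1)).filter (fun A => ¬ ((0 : Fin 2), Fin.last m) ∈ A)).filter
      (fun A => ¬ ((1 : Fin 2), Fin.last m) ∈ A), x ^ A.card = ∑ A ∈ fam m, x ^ A.card := by
    rw [Finset.filter_filter]
    exact sum_rest hm x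
  rw [e1, e2, e3]
  ring
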